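/- For every alternating sign matrix B = (b_{ij}) of size n, the number β(B) of join-irreducible alternating sign matrices A with A ≤ B in ASM order equals the weighted sum of inversions of B: β(B) = Σ_{i<j, k<l} (l−k)·b_{jk}·b_{il}. -/

import Mathlib

/-- An alternating sign matrix: entries in {-1,0,1}, partial row/column sums in {0,1},
full row/column sums equal to 1. -/
def IsASM {n : ℕ} (A : Matrix (Fin n) (Fin n) ℤ) : Prop :=
  (∀ i j, A i j = -1 ∨ A i j = 0 ∨ A i j = 1) ∧
  (∀ i j, (∑ k ∈ Finset.Iic j, A i k) = 0 ∨ (∑ k ∈ Finset.Iic j, A i k) = 1) ∧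
  (∀ i j, (∑ k ∈ Finset.Iic i, A k j) = 0 ∨ (∑ k ∈ Finset.Iic i, A k j) = 1) ∧
  (∀ i, (∑ k, A i k) = 1) ∧
  (∀ j, (∑ k, A k j) = 1)

/-- Corner sum matrix. -/
def cornerSum {n : ℕ} (A : Matrix (Fin n) (Fin n) ℤ) (i j : Fin n) : ℤ :=
  ∑ p ∈ Finset.Iic i, ∑ q ∈ Finset.Iic j, A p q

/-- ASM order: `A ≤ B` iff corner sums of `A` dominate those of `B`. -/
def asmLE {n : ℕ} (A B : Matrix (Fin n) (Fin n) ℤ) : Prop :=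
  ∀ i j, cornerSum B i j ≤ cornerSum A i j

def asmLT {n : ℕ} (A B : Matrix (Fin n) (Fin n) ℤ) : Prop :=
  asmLE A B ∧ ¬ asmLE B A

/-- `B` covers `A` in the poset of ASMs of size `n`. -/
def asmCovers {n : ℕ} (A B : Matrix (Fin n) (Fin n) ℤ) : Prop :=
  asmLT A B ∧ ∀ C : Matrix (Fin n) (Fin n) ℤ, IsASM C → asmLT A C → ¬ asmLT C B

/-- `A` is join-irreducible: it covers exactly one element of the ASM poset. -/
def JoinIrred {n : ℕ} (A : Matrix (Fin n) (Fin n) ℤ) : Prop :=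
  IsASM A ∧ ∃! C : Matrix (Fin n) (Fin n) ℤ, IsASM C ∧ asmCovers C A

/-- `β B` = number of join-irreducible ASMs weakly below `B`. -/
noncomputable def asmBeta {n : ℕ} (B : Matrix (Fin n) (Fin n) ℤ) : ℕ :=
  Set.ncard {A : Matrix (Fin n) (Fin n) ℤ | JoinIrred A ∧ asmLE A B}


namespace ASMAux

/-- Extension of a matrix to ℕ×ℕ by zero. -/
def ext {n : ℕ} (A : Matrix (Fin n) (Fin n) ℤ) (p q : ℕ) : ℤ :=
  if h : p < n ∧ q < n then A ⟨p, h.1⟩ ⟨q, h.2⟩ else 0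

/-- Cumulative sums with strict upper bounds, defined on ℕ. -/
def Fc {n : ℕ} (A : Matrix (Fin n) (Fin n) ℤ) (a b : ℕ) : ℤ :=
  ∑ p ∈ Finset.range a, ∑ q ∈ Finset.range b, ext A p q

/-- Matrix from a cumulative-sum function by second differences. -/
def unF (n : ℕ) (r : ℕ → ℕ → ℤ) : Matrix (Fin n) (Fin n) ℤ :=
  fun p q => r (p+1) (q+1) - r p (q+1) - r (p+1) q + r p q

structure ValidF (n : ℕ) (r : ℕ → ℕ → ℤ) : Prop where
  stepR : ∀ a b, a < n → b ≤ n → r a b ≤ r (a+1) b ∧ r (a+1) b ≤ r a b + 1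
  stepC : ∀ a b, a ≤ n → b < n → r a b ≤ r a (b+1) ∧ r a (b+1) ≤ r a b + 1
  left : ∀ b, b ≤ n → r 0 b = 0
  top : ∀ a, a ≤ n → r a 0 = 0
  bottom : ∀ b, b ≤ n → r n b = (b : ℤ)
  right : ∀ a, a ≤ n → r a n = (a : ℤ)

variable {n : ℕ}

lemma Fc_succ_left (A : Matrix (Fin n) (Fin n) ℤ) (a b : ℕ) :
    Fc A (a+1) b = Fc A a b + ∑ q ∈ Finset.range b, ext A a q := by
  simp [Fc, Finset.sum_range_succ]

lemma Fc_succ_right (A : Matrix (Fin n) (Fin n) ℤ) (a b : ℕ) :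
    Fc A a (b+1) = Fc A a b + ∑ p ∈ Finset.range a, ext A p b := by
  simp [Fc, Finset.sum_range_succ, Finset.sum_add_distrib]

@[simp] lemma Fc_zero_left (A : Matrix (Fin n) (Fin n) ℤ) (b : ℕ) : Fc A 0 b = 0 := by
  simp [Fc]

@[simp] lemma Fc_zero_right (A : Matrix (Fin n) (Fin n) ℤ) (a : ℕ) : Fc A a 0 = 0 := by
  simp [Fc]

/-- Sum over `Iic i` in `Fin n` equals sum over `range (i+1)` of the extension. -/
lemma sum_Iic_eq_range (f : Fin n → ℤ) (i : Fin n) :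
    ∑ p ∈ Finset.Iic i, f p
      = ∑ p ∈ Finset.range ((i : ℕ)+1), (if h : p < n then f ⟨p, h⟩ else 0) := by
  calc ∑ p ∈ Finset.Iic i, f p
      = ∑ p : Fin n, if (p:ℕ) < (i:ℕ)+1 then f p else 0 := by
        rw [← Finset.sum_filter]
        have : Finset.Iic i = Finset.filter (fun p : Fin n => (p:ℕ) < (i:ℕ)+1) Finset.univ := by
          ext p
          simp only [Finset.mem_Iic, Finset.mem_filter, Finset.mem_univ, true_and,
            Nat.lt_succ_iff, Fin.le_def]
        rw [this]
    _ = ∑ p ∈ Finset.range n,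
          (fun m => if h : m < n then (if m < (i:ℕ)+1 then f ⟨m,h⟩ else 0) else 0) p := by
        rw [← Fin.sum_univ_eq_sum_range]
        apply Finset.sum_congr rfl
        intro p _
        simp [p.isLt]
    _ = ∑ p ∈ Finset.range ((i:ℕ)+1),
          (fun m => if h : m < n then (if m < (i:ℕ)+1 then f ⟨m,h⟩ else 0) else 0) p := by
        rw [← Finset.sum_subset (Finset.range_subset_range.mpr i.isLt)]
        intro x hx hx2
        simp only [Finset.mem_range] at hx hx2
        simp [hx2]
    _ = ∑ p ∈ Finset.range ((i:ℕ)+1), (if h : p < n then f ⟨p, h⟩ else 0) := by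
        apply Finset.sum_congr rfl
        intro p hp
        simp only [Finset.mem_range] at hp
        have hpn : p < n := hp.trans_le i.isLt
        simp [hpn, hp]

lemma cornerSum_eq_Fc (A : Matrix (Fin n) (Fin n) ℤ) (i j : Fin n) :
    cornerSum A i j = Fc A ((i:ℕ)+1) ((j:ℕ)+1) := by
  unfold cornerSum Fc
  rw [sum_Iic_eq_range (fun p => ∑ q ∈ Finset.Iic j, A p q) i]
  apply Finset.sum_congr rfl
  intro p hp
  have hpn : p < n := (Finset.mem_range.mp hp).trans_le i.isLt
  rw [dif_pos hpn, sum_Iic_eq_range (fun q => A ⟨p, hpn⟩ q) j]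
  apply Finset.sum_congr rfl
  intro q hq
  have hqn : q < n := (Finset.mem_range.mp hq).trans_le j.isLt
  simp [ext, hpn, hqn]

/-- Row partial sums in terms of Fc. -/
lemma rowsum_eq (A : Matrix (Fin n) (Fin n) ℤ) (a b : ℕ) (ha : a < n) :
    Fc A (a+1) b - Fc A a b = ∑ q ∈ Finset.range b, ext A a q := by
  rw [Fc_succ_left]; ring

lemma colsum_eq (A : Matrix (Fin n) (Fin n) ℤ) (a b : ℕ) (hb : b < n) :
    Fc A a (b+1) - Fc A a b = ∑ p ∈ Finset.range a, ext A p b := by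
  rw [Fc_succ_right]; ring

lemma range_sum_eq_Iic (A : Matrix (Fin n) (Fin n) ℤ) (p : Fin n) (b : ℕ) (hb : 0 < b)
    (hbn : b ≤ n) : ∑ q ∈ Finset.range b, ext A (p:ℕ) q = ∑ k ∈ Finset.Iic (⟨b-1, by omega⟩ : Fin n), A p k := by
  rw [sum_Iic_eq_range (fun k => A p k) ⟨b-1, by omega⟩]
  have : (((⟨b-1, by omega⟩ : Fin n) : ℕ)) + 1 = b := by simp; omega
  rw [this]
  apply Finset.sum_congr rfl
  intro q hq
  have hqn : q < n := by
    have := Finset.mem_range.mp hq; omega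
  simp [ext, p.isLt, hqn]

lemma range_sum_eq_Iic_col (A : Matrix (Fin n) (Fin n) ℤ) (q : Fin n) (a : ℕ) (ha : 0 < a)
    (han : a ≤ n) : ∑ p ∈ Finset.range a, ext A p (q:ℕ) = ∑ k ∈ Finset.Iic (⟨a-1, by omega⟩ : Fin n), A k q := by
  rw [sum_Iic_eq_range (fun k => A k q) ⟨a-1, by omega⟩]
  have : (((⟨a-1, by omega⟩ : Fin n) : ℕ)) + 1 = a := by simp; omega
  rw [this]
  apply Finset.sum_congr rfl
  intro p hp
  have hpn : p < n := by
    have := Finset.mem_range.mp hp; omega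
  simp [ext, q.isLt, hpn]


lemma row_ext_sum (A : Matrix (Fin n) (Fin n) ℤ) (p : ℕ) (hp : p < n) :
    ∑ q ∈ Finset.range n, ext A p q = ∑ k : Fin n, A ⟨p, hp⟩ k := by
  rw [← Fin.sum_univ_eq_sum_range (fun q => ext A p q) n]
  apply Finset.sum_congr rfl
  intro k _
  simp [ext, hp, k.isLt]

lemma col_ext_sum (A : Matrix (Fin n) (Fin n) ℤ) (q : ℕ) (hq : q < n) :
    ∑ p ∈ Finset.range n, ext A p q = ∑ k : Fin n, A k ⟨q, hq⟩ := by
  rw [← Fin.sum_univ_eq_sum_range (fun p => ext A p q) n]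
  apply Finset.sum_congr rfl
  intro k _
  simp [ext, hq, k.isLt]

lemma entry_eq_Fc (A : Matrix (Fin n) (Fin n) ℤ) (p q : Fin n) :
    A p q = Fc A ((p:ℕ)+1) ((q:ℕ)+1) - Fc A (p:ℕ) ((q:ℕ)+1)
      - Fc A ((p:ℕ)+1) (q:ℕ) + Fc A (p:ℕ) (q:ℕ) := by
  rw [Fc_succ_left, Fc_succ_left, Finset.sum_range_succ]
  have : ext A (p:ℕ) (q:ℕ) = A p q := by simp [ext, p.isLt, q.isLt]
  rw [this]; ring

lemma isASM_iff_validF (A : Matrix (Fin n) (Fin n) ℤ) :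
    IsASM A ↔ ValidF n (Fc A) := by
  constructor
  · rintro ⟨h1, h2, h3, h4, h5⟩
    have right : ∀ a, a ≤ n → Fc A a n = (a : ℤ) := by
      intro a ha
      induction a with
      | zero => simp
      | succ a ih =>
        rw [Fc_succ_left, ih (by omega), row_ext_sum A a (by omega), h4]
        push_cast; ring
    have bottom : ∀ b, b ≤ n → Fc A n b = (b : ℤ) := by
      intro b hb
      induction b with
      | zero => simp
      | succ b ih =>
        rw [Fc_succ_right, ih (by omega), col_ext_sum A b (by omega), h5]
        push_cast; ring
    refine ⟨?_, ?_, by simp, by simp, bottom, right⟩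
    · intro a b ha hb
      rw [Fc_succ_left]
      rcases Nat.eq_zero_or_pos b with hb0 | hb0
      · subst hb0; simp
      · have := range_sum_eq_Iic A ⟨a, ha⟩ b hb0 hb
        simp only at this
        rw [this]
        rcases h2 ⟨a, ha⟩ ⟨b-1, by omega⟩ with h | h <;> rw [h] <;> omega
    · intro a b ha hb
      rw [Fc_succ_right]
      rcases Nat.eq_zero_or_pos a with ha0 | ha0
      · subst ha0; simp
      · have := range_sum_eq_Iic_col A ⟨b, hb⟩ a ha0 ha
        simp only at this
        rw [this]
        rcases h3 ⟨a-1, by omega⟩ ⟨b, hb⟩ with h | h <;> rw [h] <;> omega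
  · intro V
    have hrow : ∀ (i j : Fin n), (∑ k ∈ Finset.Iic j, A i k) = 0 ∨ (∑ k ∈ Finset.Iic j, A i k) = 1 := by
      intro i j
      have e : ∑ k ∈ Finset.Iic j, A i k = Fc A ((i:ℕ)+1) ((j:ℕ)+1) - Fc A (i:ℕ) ((j:ℕ)+1) := by
        rw [rowsum_eq A (i:ℕ) ((j:ℕ)+1) i.isLt]
        have := range_sum_eq_Iic A i ((j:ℕ)+1) (by omega) (by omega)
        rw [this]
        congr 1
      have := V.stepR (i:ℕ) ((j:ℕ)+1) i.isLt (by omega)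
      omega
    have hcol : ∀ (i j : Fin n), (∑ k ∈ Finset.Iic i, A k j) = 0 ∨ (∑ k ∈ Finset.Iic i, A k j) = 1 := by
      intro i j
      have e : ∑ k ∈ Finset.Iic i, A k j = Fc A ((i:ℕ)+1) ((j:ℕ)+1) - Fc A ((i:ℕ)+1) (j:ℕ) := by
        rw [colsum_eq A ((i:ℕ)+1) (j:ℕ) j.isLt]
        have := range_sum_eq_Iic_col A j ((i:ℕ)+1) (by omega) (by omega)
        rw [this]
        congr 1
      have := V.stepC ((i:ℕ)+1) (j:ℕ) (by omega) j.isLt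
      omega
    refine ⟨?_, hrow, hcol, ?_, ?_⟩
    · intro i j
      have e := entry_eq_Fc A i j
      have d1 := V.stepR (i:ℕ) ((j:ℕ)+1) i.isLt (by omega)
      have d2 := V.stepR (i:ℕ) (j:ℕ) i.isLt (by omega)
      omega
    · intro i
      have e : ∑ k : Fin n, A i k = Fc A ((i:ℕ)+1) n - Fc A (i:ℕ) n := by
        rw [rowsum_eq A (i:ℕ) n i.isLt, row_ext_sum A (i:ℕ) i.isLt]
      rw [e, V.right ((i:ℕ)+1) (by omega), V.right (i:ℕ) (by omega)]
      push_cast; ring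
    · intro j
      have e : ∑ k : Fin n, A k j = Fc A n ((j:ℕ)+1) - Fc A n (j:ℕ) := by
        rw [colsum_eq A n (j:ℕ) j.isLt, col_ext_sum A (j:ℕ) j.isLt]
      rw [e, V.bottom ((j:ℕ)+1) (by omega), V.bottom (j:ℕ) (by omega)]
      push_cast; ring


namespace ValidF

variable {n : ℕ} {r : ℕ → ℕ → ℤ}

lemma mono_left (V : ValidF n r) {a a' b : ℕ} (h : a ≤ a') (h2 : a' ≤ n) (h3 : b ≤ n) :
    r a b ≤ r a' b := by
  induction a' with
  | zero => have : a = 0 := by omega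
            subst this; exact le_refl _
  | succ m ih =>
    rcases Nat.eq_or_lt_of_le h with rfl | hlt
    · exact le_refl _
    · exact (ih (by omega) (by omega)).trans (V.stepR m b (by omega) h3).1

lemma lip_left (V : ValidF n r) {a a' b : ℕ} (h : a ≤ a') (h2 : a' ≤ n) (h3 : b ≤ n) :
    r a' b ≤ r a b + ((a' : ℤ) - a) := by
  induction a' with
  | zero => have : a = 0 := by omega
            subst this; simp
  | succ m ih =>
    rcases Nat.eq_or_lt_of_le h with rfl | hlt
    · simp
    · have h4 := (V.stepR m b (by omega) h3).2
      have h5 := ih (by omega) (by omega)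
      push_cast
      push_cast at h5
      omega

lemma mono_right (V : ValidF n r) {a b b' : ℕ} (h : b ≤ b') (h2 : b' ≤ n) (h3 : a ≤ n) :
    r a b ≤ r a b' := by
  induction b' with
  | zero => have : b = 0 := by omega
            subst this; exact le_refl _
  | succ m ih =>
    rcases Nat.eq_or_lt_of_le h with rfl | hlt
    · exact le_refl _
    · exact (ih (by omega) (by omega)).trans (V.stepC a m h3 (by omega)).1

lemma lip_right (V : ValidF n r) {a b b' : ℕ} (h : b ≤ b') (h2 : b' ≤ n) (h3 : a ≤ n) :
    r a b' ≤ r a b + ((b' : ℤ) - b) := by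
  induction b' with
  | zero => have : b = 0 := by omega
            subst this; simp
  | succ m ih =>
    rcases Nat.eq_or_lt_of_le h with rfl | hlt
    · simp
    · have h4 := (V.stepC a m h3 (by omega)).2
      have h5 := ih (by omega) (by omega)
      push_cast
      push_cast at h5
      omega

lemma nonneg (V : ValidF n r) {a b : ℕ} (ha : a ≤ n) (hb : b ≤ n) : 0 ≤ r a b := by
  have := V.mono_left (Nat.zero_le a) ha hb
  rw [V.left b hb] at this
  exact this

lemma le_fst (V : ValidF n r) {a b : ℕ} (ha : a ≤ n) (hb : b ≤ n) : r a b ≤ (a : ℤ) := by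
  have := V.mono_right hb (le_refl n) ha
  rw [V.right a ha] at this
  exact this

lemma le_snd (V : ValidF n r) {a b : ℕ} (ha : a ≤ n) (hb : b ≤ n) : r a b ≤ (b : ℤ) := by
  have := V.mono_left ha (le_refl n) hb
  rw [V.bottom b hb] at this
  exact this

lemma ge_lower (V : ValidF n r) {a b : ℕ} (ha : a ≤ n) (hb : b ≤ n) :
    (a : ℤ) + b - n ≤ r a b := by
  have := V.lip_left ha (le_refl n) hb
  rw [V.bottom b hb] at this
  omega

lemma cross (V : ValidF n r) {a b p q : ℕ} (ha : a ≤ n) (hb : b ≤ n) (hp : p ≤ n)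
    (hq : q ≤ n) : r p q ≤ r a b + max ((p:ℤ) - a) 0 + max ((q:ℤ) - b) 0 := by
  have h1 : r p q ≤ r (max a p) (max b q) := by
    exact (V.mono_left (le_max_right a p) (by omega) (by omega)).trans
      (V.mono_right (le_max_right b q) (by omega) (by omega))
  have h2 : r (max a p) (max b q) ≤ r a (max b q) + (((max a p : ℕ) : ℤ) - a) :=
    V.lip_left (le_max_left a p) (by omega) (by omega)
  have h3 : r a (max b q) ≤ r a b + (((max b q : ℕ) : ℤ) - b) :=
    V.lip_right (le_max_left b q) (by omega) ha
  have e1 : ((max a p : ℕ) : ℤ) = max (a:ℤ) (p:ℤ) := by push_cast; rfl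
  have e2 : ((max b q : ℕ) : ℤ) = max (b:ℤ) (q:ℤ) := by push_cast; rfl
  rw [e1] at h2
  rw [e2] at h3
  have m1 : max (a:ℤ) (p:ℤ) - a ≤ max ((p:ℤ) - a) 0 := by
    rcases le_total (a:ℤ) p with h | h <;> simp [max_eq_left, max_eq_right, h] <;> omega
  have m2 : max (b:ℤ) (q:ℤ) - b ≤ max ((q:ℤ) - b) 0 := by
    rcases le_total (b:ℤ) q with h | h <;> simp [max_eq_left, max_eq_right, h] <;> omega
  omega

end ValidF


lemma Fc_unF (r : ℕ → ℕ → ℤ) (h0l : ∀ b, b ≤ n → r 0 b = 0)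
    (h0t : ∀ a, a ≤ n → r a 0 = 0) :
    ∀ a b, a ≤ n → b ≤ n → Fc (unF n r) a b = r a b := by
  have inner : ∀ p, p < n → ∀ b, b ≤ n →
      ∑ q ∈ Finset.range b, ext (unF n r) p q = (r (p+1) b - r p b) - (r (p+1) 0 - r p 0) := by
    intro p hp b hb
    induction b with
    | zero => simp
    | succ m ih =>
      rw [Finset.sum_range_succ, ih (by omega)]
      have hm : m < n := by omega
      have : ext (unF n r) p m = r (p+1) (m+1) - r p (m+1) - r (p+1) m + r p m := by
        simp [ext, hp, hm, unF]
      rw [this]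
      ring
  intro a b ha hb
  induction a with
  | zero => simp [h0l b hb]
  | succ m ih =>
    rw [Fc_succ_left, ih (by omega), inner m (by omega) b hb,
      h0t (m+1) (by omega), h0t m (by omega)]
    ring

lemma matrix_eq_of_Fc {A C : Matrix (Fin n) (Fin n) ℤ}
    (h : ∀ a b, a ≤ n → b ≤ n → Fc A a b = Fc C a b) : A = C := by
  ext p q
  rw [entry_eq_Fc A p q, entry_eq_Fc C p q,
    h ((p:ℕ)+1) ((q:ℕ)+1) (by omega) (by omega),
    h (p:ℕ) ((q:ℕ)+1) (by omega) (by omega),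
    h ((p:ℕ)+1) (q:ℕ) (by omega) (by omega),
    h (p:ℕ) (q:ℕ) (by omega) (by omega)]

lemma asmLE_iff_Fc (A B : Matrix (Fin n) (Fin n) ℤ) :
    asmLE A B ↔ ∀ a b, a ≤ n → b ≤ n → Fc B a b ≤ Fc A a b := by
  constructor
  · intro h a b ha hb
    rcases Nat.eq_zero_or_pos a with rfl | ha0
    · simp
    rcases Nat.eq_zero_or_pos b with rfl | hb0
    · simp
    have := h ⟨a-1, by omega⟩ ⟨b-1, by omega⟩
    rw [cornerSum_eq_Fc, cornerSum_eq_Fc] at this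
    simp only at this
    have e1 : a - 1 + 1 = a := by omega
    have e2 : b - 1 + 1 = b := by omega
    rwa [e1, e2] at this
  · intro h i j
    rw [cornerSum_eq_Fc, cornerSum_eq_Fc]
    exact h ((i:ℕ)+1) ((j:ℕ)+1) (by omega) (by omega)


/-- Increment a cumulative function at one interior point. -/
def inc (r : ℕ → ℕ → ℤ) (a b : ℕ) : ℕ → ℕ → ℤ :=
  fun p q => if p = a ∧ q = b then r p q + 1 else r p q

/-- The point `(a,b)` is incrementable for `r`. -/
def IncOK (n : ℕ) (r : ℕ → ℕ → ℤ) (a b : ℕ) : Prop :=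
  1 ≤ a ∧ a < n ∧ 1 ≤ b ∧ b < n ∧
  r (a-1) b = r a b ∧ r a (b-1) = r a b ∧ r (a+1) b = r a b + 1 ∧ r a (b+1) = r a b + 1

/-- Cumulative function of the join-irreducible candidate. -/
def Kr (a b : ℕ) (s : ℤ) : ℕ → ℕ → ℤ :=
  fun p q => min (min (p:ℤ) (q:ℤ)) (s + max ((p:ℤ) - a) 0 + max ((q:ℤ) - b) 0)

/-- Admissibility of a triple. -/
def Adm (n a b : ℕ) (s : ℤ) : Prop :=
  1 ≤ a ∧ a < n ∧ 1 ≤ b ∧ b < n ∧ 0 ≤ s ∧ (a:ℤ) + b - n ≤ s ∧ s + 1 ≤ min (a:ℤ) (b:ℤ)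

lemma validF_inc {r : ℕ → ℕ → ℤ} {a b : ℕ} (V : ValidF n r) (h : IncOK n r a b) :
    ValidF n (inc r a b) := by
  obtain ⟨ha1, han, hb1, hbn, e1, e2, e3, e4⟩ := h
  constructor
  · intro p q hp hq
    have hs := V.stepR p q hp hq
    by_cases h1 : p = a ∧ q = b
    · obtain ⟨hpa, hqb⟩ := h1
      subst hpa
      subst hqb
      have c2 : ¬(p + 1 = p ∧ q = q) := by omega
      simp only [inc, if_pos (⟨rfl, rfl⟩ : p = p ∧ q = q), if_neg c2]
      omega
    · by_cases h2 : p + 1 = a ∧ q = b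
      · obtain ⟨hpa, hqb⟩ := h2
        subst hpa
        subst hqb
        simp only [Nat.add_sub_cancel] at e1
        simp only [inc, if_neg h1, if_pos (⟨rfl, rfl⟩ : p + 1 = p + 1 ∧ q = q)]
        omega
      · simp only [inc, if_neg h1, if_neg h2]
        exact hs
  · intro p q hp hq
    have hs := V.stepC p q hp hq
    by_cases h1 : p = a ∧ q = b
    · obtain ⟨hpa, hqb⟩ := h1
      subst hpa
      subst hqb
      have c2 : ¬(p = p ∧ q + 1 = q) := by omega
      simp only [inc, if_pos (⟨rfl, rfl⟩ : p = p ∧ q = q), if_neg c2]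
      omega
    · by_cases h2 : p = a ∧ q + 1 = b
      · obtain ⟨hpa, hqb⟩ := h2
        subst hpa
        subst hqb
        simp only [Nat.add_sub_cancel] at e2
        simp only [inc, if_neg h1, if_pos (⟨rfl, rfl⟩ : p = p ∧ q + 1 = q + 1)]
        omega
      · simp only [inc, if_neg h1, if_neg h2]
        exact hs
  · intro q hq
    have : ¬(0 = a ∧ q = b) := by omega
    simp only [inc, if_neg this]
    exact V.left q hq
  · intro p hp
    have : ¬(p = a ∧ 0 = b) := by omega
    simp only [inc, if_neg this]
    exact V.top p hp
  · intro q hq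
    have : ¬(n = a ∧ q = b) := by omega
    simp only [inc, if_neg this]
    exact V.bottom q hq
  · intro p hp
    have : ¬(p = a ∧ n = b) := by omega
    simp only [inc, if_neg this]
    exact V.right p hp

lemma validF_Kr {a b : ℕ} {s : ℤ} (h : Adm n a b s) : ValidF n (Kr a b s) := by
  obtain ⟨ha1, han, hb1, hbn, hs0, hsl, hsu⟩ := h
  constructor
  · intro p q hp hq
    simp only [Kr]
    push_cast
    omega
  · intro p q hp hq
    simp only [Kr]
    push_cast
    omega
  · intro q hq
    simp only [Kr]
    push_cast
    omega
  · intro p hp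
    simp only [Kr]
    push_cast
    omega
  · intro q hq
    simp only [Kr]
    push_cast
    omega
  · intro p hp
    simp only [Kr]
    push_cast
    omega

lemma Kr_self {a b : ℕ} {s : ℤ} (h : Adm n a b s) : Kr a b s a b = s := by
  obtain ⟨ha1, han, hb1, hbn, hs0, hsl, hsu⟩ := h
  simp only [Kr]
  omega

lemma le_Kr {r : ℕ → ℕ → ℤ} {a b : ℕ} {s : ℤ} (V : ValidF n r) (ha : a ≤ n) (hb : b ≤ n)
    (hs : r a b ≤ s) : ∀ p q, p ≤ n → q ≤ n → r p q ≤ Kr a b s p q := by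
  intro p q hp hq
  have h1 := V.cross ha hb hp hq
  have h2 := V.le_fst hp hq
  have h3 := V.le_snd hp hq
  simp only [Kr]
  omega

lemma incOK_Kr {a b : ℕ} {s : ℤ} (h : Adm n a b s) : IncOK n (Kr a b s) a b := by
  obtain ⟨ha1, han, hb1, hbn, hs0, hsl, hsu⟩ := h
  refine ⟨ha1, han, hb1, hbn, ?_, ?_, ?_, ?_⟩ <;>
    · simp only [Kr]
      push_cast [Nat.cast_sub ha1, Nat.cast_sub hb1]
      omega

lemma incOK_Kr_only {a b p q : ℕ} {s : ℤ} (h : Adm n a b s)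
    (hI : IncOK n (Kr a b s) p q) : p = a ∧ q = b := by
  obtain ⟨ha1, han, hb1, hbn, hs0, hsl, hsu⟩ := h
  obtain ⟨hp1, hpn, hq1, hqn, e1, e2, e3, e4⟩ := hI
  simp only [Kr] at e1 e2 e3 e4
  push_cast [Nat.cast_sub hp1, Nat.cast_sub hq1] at e1 e2 e3 e4
  constructor <;> omega


lemma adm_of_incOK {r : ℕ → ℕ → ℤ} {a b : ℕ} (V : ValidF n r) (h : IncOK n r a b) :
    Adm n a b (r a b) := by
  obtain ⟨ha1, han, hb1, hbn, e1, e2, e3, e4⟩ := h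
  refine ⟨ha1, han, hb1, hbn, V.nonneg (a := a) (b := b) (by omega) (by omega),
    V.ge_lower (a := a) (b := b) (by omega) (by omega), ?_⟩
  have h1 : r a b ≤ ((a:ℤ) - 1) := by
    have := V.le_fst (a := a - 1) (b := b) (by omega) (by omega)
    rw [e1] at this
    push_cast [Nat.cast_sub ha1] at this
    omega
  have h2 : r a b ≤ ((b:ℤ) - 1) := by
    have := V.le_snd (a := a) (b := b - 1) (by omega) (by omega)
    rw [e2] at this
    push_cast [Nat.cast_sub hb1] at this
    omega
  omega

lemma eq_Kr_of_unique_inc {r : ℕ → ℕ → ℤ} {a b : ℕ} (V : ValidF n r)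
    (hab : IncOK n r a b) (huniq : ∀ p q, IncOK n r p q → p = a ∧ q = b) :
    ∀ p q, p ≤ n → q ≤ n → r p q = Kr a b (r a b) p q := by
  set s := r a b with hs
  have hanlt : a < n := hab.2.1
  have hbnlt : b < n := hab.2.2.2.1
  have adm : Adm n a b s := adm_of_incOK V hab
  have K := validF_Kr (n := n) adm
  have hle : ∀ p q, p ≤ n → q ≤ n → r p q ≤ Kr a b s p q :=
    le_Kr V (by omega : a ≤ n) (by omega : b ≤ n) (le_refl s)
  by_contra hcon
  push_neg at hcon
  obtain ⟨p₀, q₀, hp₀, hq₀, hne⟩ := hcon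
  -- the set of points where r < Kr
  classical
  set U : Finset (ℕ × ℕ) :=
    (Finset.range (n+1) ×ˢ Finset.range (n+1)).filter
      (fun pq => r pq.1 pq.2 < Kr a b s pq.1 pq.2) with hU
  have hUne : U.Nonempty := by
    refine ⟨(p₀, q₀), ?_⟩
    simp only [hU, Finset.mem_filter, Finset.mem_product, Finset.mem_range]
    refine ⟨⟨by omega, by omega⟩, lt_of_le_of_ne (hle p₀ q₀ hp₀ hq₀) hne⟩
  obtain ⟨u, hu, humin⟩ := U.exists_min_image (fun pq => r pq.1 pq.2) hUne
  have huU := hu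
  set V2 : Finset (ℕ × ℕ) := U.filter (fun pq => r pq.1 pq.2 = r u.1 u.2) with hV2
  have hV2ne : V2.Nonempty := ⟨u, by simp [hV2, hu]⟩
  obtain ⟨w, hw, hwmax⟩ := V2.exists_max_image (fun pq => pq.1 + pq.2) hV2ne
  obtain ⟨hwU, hwval⟩ := Finset.mem_filter.mp hw
  obtain ⟨hwmem, hwlt⟩ := Finset.mem_filter.mp hwU
  obtain ⟨hwp, hwq⟩ := Finset.mem_product.mp hwmem
  rw [Finset.mem_range] at hwp hwq
  set p := w.1 with hp
  set q := w.2 with hq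
  have hpn : p ≤ n := by omega
  have hqn : q ≤ n := by omega
  -- membership helper
  have memU : ∀ x y : ℕ, x ≤ n → y ≤ n → r x y < Kr a b s x y → (x, y) ∈ U := by
    intro x y hx hy hlt
    simp only [hU, Finset.mem_filter, Finset.mem_product, Finset.mem_range]
    exact ⟨⟨by omega, by omega⟩, hlt⟩
  -- p, q are interior
  have hp1 : 1 ≤ p := by
    rcases Nat.eq_zero_or_pos p with h0 | h
    · exfalso
      rw [h0] at hwlt
      rw [V.left q hqn, K.left q hqn] at hwlt
      omega
    · exact h
  have hq1 : 1 ≤ q := by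
    rcases Nat.eq_zero_or_pos q with h0 | h
    · exfalso
      rw [h0] at hwlt
      rw [V.top p hpn, K.top p hpn] at hwlt
      omega
    · exact h
  have hplt : p < n := by
    rcases Nat.lt_or_ge p n with h | h
    · exact h
    · exfalso
      have : p = n := by omega
      rw [this] at hwlt
      rw [V.bottom q hqn, K.bottom q hqn] at hwlt
      omega
  have hqlt : q < n := by
    rcases Nat.lt_or_ge q n with h | h
    · exact h
    · exfalso
      have : q = n := by omega
      rw [this] at hwlt
      rw [V.right p hpn, K.right p hpn] at hwlt
      omega
  -- minimal value property
  have hminval : ∀ x y : ℕ, x ≤ n → y ≤ n → r x y < Kr a b s x y → r p q ≤ r x y := by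
    intro x y hx hy hlt
    have h6 := humin (x, y) (memU x y hx hy hlt)
    simp only at h6
    omega
  -- neighbors
  have step1 := V.stepR (p-1) q (by omega) hqn
  rw [Nat.sub_add_cancel hp1] at step1
  have step2 := V.stepC p (q-1) hpn (by omega)
  rw [Nat.sub_add_cancel hq1] at step2
  have step3 := V.stepR p q (by omega) hqn
  have step4 := V.stepC p q hpn (by omega)
  have kstep1 := K.stepR (p-1) q (by omega) hqn
  rw [Nat.sub_add_cancel hp1] at kstep1
  have kstep2 := K.stepC p (q-1) hpn (by omega)
  rw [Nat.sub_add_cancel hq1] at kstep2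
  have kstep3 := K.stepR p q (by omega) hqn
  have kstep4 := K.stepC p q hpn (by omega)
  have f1 : r (p-1) q = r p q := by
    by_contra hne1
    have hlt1 : r (p-1) q < r p q := by omega
    have : r (p-1) q < Kr a b s (p-1) q := by omega
    have := hminval (p-1) q (by omega) hqn this
    omega
  have f2 : r p (q-1) = r p q := by
    by_contra hne2
    have : r p (q-1) < Kr a b s p (q-1) := by omega
    have := hminval p (q-1) hpn (by omega) this
    omega
  have f3 : r (p+1) q = r p q + 1 := by
    by_contra hne3
    have hmem : r (p+1) q < Kr a b s (p+1) q := by omega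
    have h5 : (p+1, q) ∈ V2 := by
      simp only [hV2, Finset.mem_filter]
      refine ⟨memU (p+1) q (by omega) hqn hmem, ?_⟩
      have h6 := humin (p+1, q) (memU (p+1) q (by omega) hqn hmem)
      simp only at h6
      show r (p+1) q = r u.1 u.2
      omega
    have h7 := hwmax (p+1, q) h5
    simp only at h7
    omega
  have f4 : r p (q+1) = r p q + 1 := by
    by_contra hne4
    have hmem : r p (q+1) < Kr a b s p (q+1) := by omega
    have h5 : (p, q+1) ∈ V2 := by
      simp only [hV2, Finset.mem_filter]
      refine ⟨memU p (q+1) hpn (by omega) hmem, ?_⟩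
      have h6 := humin (p, q+1) (memU p (q+1) hpn (by omega) hmem)
      simp only at h6
      show r p (q+1) = r u.1 u.2
      omega
    have h7 := hwmax (p, q+1) h5
    simp only at h7
    omega
  have : IncOK n r p q := ⟨hp1, hplt, hq1, hqlt, f1, f2, f3, f4⟩
  obtain ⟨rfl, rfl⟩ := huniq p q this
  rw [Kr_self adm] at hwlt
  omega


lemma validF_congr {r r' : ℕ → ℕ → ℤ} (h : ∀ a b, a ≤ n → b ≤ n → r a b = r' a b)
    (V : ValidF n r) : ValidF n r' := by
  constructor
  · intro p q hp hq
    rw [← h p q (by omega) hq, ← h (p+1) q (by omega) hq]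
    exact V.stepR p q hp hq
  · intro p q hp hq
    rw [← h p q hp (by omega), ← h p (q+1) hp (by omega)]
    exact V.stepC p q hp hq
  · intro q hq
    rw [← h 0 q (by omega) hq]
    exact V.left q hq
  · intro p hp
    rw [← h p 0 hp (by omega)]
    exact V.top p hp
  · intro q hq
    rw [← h n q (le_refl n) hq]
    exact V.bottom q hq
  · intro p hp
    rw [← h p n hp (le_refl n)]
    exact V.right p hp

lemma validF_min {r r' : ℕ → ℕ → ℤ} (V : ValidF n r) (V' : ValidF n r') :
    ValidF n (fun p q => min (r p q) (r' p q)) := by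
  constructor
  · intro p q hp hq
    have h1 := V.stepR p q hp hq
    have h2 := V'.stepR p q hp hq
    constructor <;> omega
  · intro p q hp hq
    have h1 := V.stepC p q hp hq
    have h2 := V'.stepC p q hp hq
    constructor <;> omega
  · intro q hq
    simp only [V.left q hq, V'.left q hq, min_self]
  · intro p hp
    simp only [V.top p hp, V'.top p hp, min_self]
  · intro q hq
    simp only [V.bottom q hq, V'.bottom q hq, min_self]
  · intro p hp
    simp only [V.right p hp, V'.right p hp, min_self]

lemma unF_spec {r : ℕ → ℕ → ℤ} (V : ValidF n r) :
    IsASM (unF n r) ∧ ∀ a b, a ≤ n → b ≤ n → Fc (unF n r) a b = r a b := by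
  have hFc := Fc_unF r V.left V.top
  refine ⟨?_, hFc⟩
  rw [isASM_iff_validF]
  exact validF_congr (fun a b ha hb => (hFc a b ha hb).symm) V

lemma not_asmLE_iff {A C : Matrix (Fin n) (Fin n) ℤ} :
    ¬ asmLE A C ↔ ∃ a b, a ≤ n ∧ b ≤ n ∧ Fc A a b < Fc C a b := by
  rw [asmLE_iff_Fc]
  push_neg
  constructor
  · rintro ⟨a, b, ha, hb, h⟩
    exact ⟨a, b, ha, hb, h⟩
  · rintro ⟨a, b, ha, hb, h⟩
    exact ⟨a, b, ha, hb, h⟩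

/-- Half of the cover characterization: an incrementation is covered. -/
lemma covers_of_inc {A : Matrix (Fin n) (Fin n) ℤ} (hA : IsASM A) {a b : ℕ}
    (hI : IncOK n (Fc A) a b) :
    IsASM (unF n (inc (Fc A) a b)) ∧ asmCovers (unF n (inc (Fc A) a b)) A := by
  have VA : ValidF n (Fc A) := (isASM_iff_validF A).mp hA
  have VI : ValidF n (inc (Fc A) a b) := validF_inc VA hI
  obtain ⟨hCasm, hCFc⟩ := unF_spec VI
  set C := unF n (inc (Fc A) a b) with hCdef
  obtain ⟨ha1, han, hb1, hbn, e1, e2, e3, e4⟩ := hI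
  have hinc_ge : ∀ p q, Fc A p q ≤ inc (Fc A) a b p q := by
    intro p q
    simp only [inc]
    split_ifs <;> omega
  have hinc_ab : inc (Fc A) a b a b = Fc A a b + 1 := by
    simp [inc]
  have hinc_ne : ∀ p q, ¬(p = a ∧ q = b) → inc (Fc A) a b p q = Fc A p q := by
    intro p q h
    simp only [inc, if_neg h]
  have hle : asmLE C A := by
    rw [asmLE_iff_Fc]
    intro x y hx hy
    rw [hCFc x y hx hy]
    exact hinc_ge x y
  have hlt : asmLT C A := by
    refine ⟨hle, ?_⟩
    rw [not_asmLE_iff]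
    exact ⟨a, b, by omega, by omega, by rw [hCFc a b (by omega) (by omega), hinc_ab]; omega⟩
  refine ⟨hCasm, hlt, ?_⟩
  intro E hE hCE hEA
  have VE : ValidF n (Fc E) := (isASM_iff_validF E).mp hE
  -- Fc A ≤ Fc E ≤ Fc C = inc (Fc A)
  have h1 : ∀ x y, x ≤ n → y ≤ n → Fc A x y ≤ Fc E x y :=
    (asmLE_iff_Fc E A).mp hEA.1
  have h2 : ∀ x y, x ≤ n → y ≤ n → Fc E x y ≤ inc (Fc A) a b x y := by
    intro x y hx hy
    have := (asmLE_iff_Fc C E).mp hCE.1 x y hx hy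
    rwa [hCFc x y hx hy] at this
  by_cases hcase : Fc E a b = Fc A a b
  · -- E = A
    have : E = A := by
      apply matrix_eq_of_Fc
      intro x y hx hy
      by_cases hxy : x = a ∧ y = b
      · obtain ⟨rfl, rfl⟩ := hxy
        omega
      · have := h2 x y hx hy
        rw [hinc_ne x y hxy] at this
        have := h1 x y hx hy
        omega
    rw [this] at hEA
    exact hEA.2 hEA.1
  · -- E = C
    have : E = C := by
      apply matrix_eq_of_Fc
      intro x y hx hy
      rw [hCFc x y hx hy]
      by_cases hxy : x = a ∧ y = b
      · obtain ⟨rfl, rfl⟩ := hxy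
        have := h1 x y hx hy
        have := h2 x y hx hy
        rw [hinc_ab] at *
        omega
      · rw [hinc_ne x y hxy]
        have := h1 x y hx hy
        have := h2 x y hx hy
        rw [hinc_ne x y hxy] at *
        omega
    rw [this] at hCE
    exact hCE.2 hCE.1


lemma asmLE_refl (A : Matrix (Fin n) (Fin n) ℤ) : asmLE A A := fun _ _ => le_refl _

/-- The other half: a cover is an incrementation. -/
lemma inc_of_covers {A C : Matrix (Fin n) (Fin n) ℤ} (hA : IsASM A) (hC : IsASM C)
    (hcov : asmCovers C A) :
    ∃ a b, IncOK n (Fc A) a b ∧ C = unF n (inc (Fc A) a b) := by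
  have VA : ValidF n (Fc A) := (isASM_iff_validF A).mp hA
  have VC : ValidF n (Fc C) := (isASM_iff_validF C).mp hC
  have hle : ∀ x y, x ≤ n → y ≤ n → Fc A x y ≤ Fc C x y :=
    (asmLE_iff_Fc C A).mp hcov.1.1
  have hne := not_asmLE_iff.mp hcov.1.2
  have hCA : C ≠ A := by
    intro h
    exact hcov.1.2 (h ▸ asmLE_refl A)
  -- Step 1 : Fc C ≤ Fc A + 1 pointwise
  have hsq : ∀ x y, x ≤ n → y ≤ n → Fc C x y ≤ Fc A x y + 1 := by
    have VD : ValidF n (fun p q => max (Fc A p q) (Fc C p q - 1)) := by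
      constructor
      · intro p q hp hq
        have h1 := VA.stepR p q hp hq
        have h2 := VC.stepR p q hp hq
        constructor <;> omega
      · intro p q hp hq
        have h1 := VA.stepC p q hp hq
        have h2 := VC.stepC p q hp hq
        constructor <;> omega
      · intro q hq
        simp only [VA.left q hq, VC.left q hq]
        norm_num
      · intro p hp
        simp only [VA.top p hp, VC.top p hp]
        norm_num
      · intro q hq
        simp only [VA.bottom q hq, VC.bottom q hq]
        omega
      · intro p hp
        simp only [VA.right p hp, VC.right p hp]
        omega
    obtain ⟨hDasm, hDFc⟩ := unF_spec VD
    have hCD : asmLT C (unF n fun p q => max (Fc A p q) (Fc C p q - 1)) := by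
      constructor
      · rw [asmLE_iff_Fc]
        intro x y hx hy
        rw [hDFc x y hx hy]
        have := hle x y hx hy
        omega
      · intro hLE
        have : C = A := by
          apply matrix_eq_of_Fc
          intro x y hx hy
          have h3 := (asmLE_iff_Fc _ C).mp hLE x y hx hy
          rw [hDFc x y hx hy] at h3
          have := hle x y hx hy
          omega
        exact hCA this
    have hnlt := hcov.2 _ hDasm hCD
    have hDA : asmLE (unF n fun p q => max (Fc A p q) (Fc C p q - 1)) A := by
      rw [asmLE_iff_Fc]
      intro x y hx hy
      rw [hDFc x y hx hy]
      omega
    have hAD : asmLE A (unF n fun p q => max (Fc A p q) (Fc C p q - 1)) := by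
      by_contra hcon
      exact hnlt ⟨hDA, hcon⟩
    intro x y hx hy
    have := (asmLE_iff_Fc A _).mp hAD x y hx hy
    rw [hDFc x y hx hy] at this
    omega
  -- interior points
  have hint : ∀ x y, x ≤ n → y ≤ n → Fc A x y < Fc C x y →
      1 ≤ x ∧ x < n ∧ 1 ≤ y ∧ y < n := by
    intro x y hx hy hlt
    refine ⟨?_, ?_, ?_, ?_⟩
    · rcases Nat.eq_zero_or_pos x with rfl | h
      · rw [VA.left y hy, VC.left y hy] at hlt
        omega
      · exact h
    · rcases Nat.lt_or_ge x n with h | h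
      · exact h
      · have : x = n := by omega
        subst this
        rw [VA.bottom y hy, VC.bottom y hy] at hlt
        omega
    · rcases Nat.eq_zero_or_pos y with rfl | h
      · rw [VA.top x hx, VC.top x hx] at hlt
        omega
      · exact h
    · rcases Nat.lt_or_ge y n with h | h
      · exact h
      · have : y = n := by omega
        subst this
        rw [VA.right x hx, VC.right x hx] at hlt
        omega
  -- Step 2 : key minimum property
  have hKey : ∀ x y, x ≤ n → y ≤ n → Fc A x y < Fc C x y →
      ∀ p q, p ≤ n → q ≤ n → min (Fc C p q) (Kr x y (Fc A x y) p q) = Fc A p q := by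
    intro x y hx hy hlt
    obtain ⟨hx1, hxn, hy1, hyn⟩ := hint x y hx hy hlt
    have adm : Adm n x y (Fc A x y) := by
      refine ⟨hx1, hxn, hy1, hyn, VA.nonneg hx hy, VA.ge_lower hx hy, ?_⟩
      have h1 := VC.le_fst hx hy
      have h2 := VC.le_snd hx hy
      omega
    have VK := validF_Kr (n := n) adm
    have Vmin := validF_min VC VK
    obtain ⟨hD2asm, hD2Fc⟩ := unF_spec Vmin
    have hALE : ∀ p q, p ≤ n → q ≤ n →
        Fc A p q ≤ min (Fc C p q) (Kr x y (Fc A x y) p q) := by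
      intro p q hp hq
      have h1 := le_Kr VA hx hy (le_refl (Fc A x y)) p q hp hq
      have h2 := hle p q hp hq
      omega
    have hCD2 : asmLT C (unF n fun p q => min (Fc C p q) (Kr x y (Fc A x y) p q)) := by
      constructor
      · rw [asmLE_iff_Fc]
        intro p q hp hq
        rw [hD2Fc p q hp hq]
        omega
      · rw [not_asmLE_iff]
        refine ⟨x, y, hx, hy, ?_⟩
        rw [hD2Fc x y hx hy]
        rw [Kr_self adm]
        omega
    have hnlt := hcov.2 _ hD2asm hCD2
    have hD2A : asmLE (unF n fun p q => min (Fc C p q) (Kr x y (Fc A x y) p q)) A := by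
      rw [asmLE_iff_Fc]
      intro p q hp hq
      rw [hD2Fc p q hp hq]
      exact hALE p q hp hq
    have hAD2 : asmLE A (unF n fun p q => min (Fc C p q) (Kr x y (Fc A x y) p q)) := by
      by_contra hcon
      exact hnlt ⟨hD2A, hcon⟩
    intro p q hp hq
    have h3 := (asmLE_iff_Fc A _).mp hAD2 p q hp hq
    rw [hD2Fc p q hp hq] at h3
    have := hALE p q hp hq
    omega
  -- Step 3 : the difference set is a single interior point
  obtain ⟨a, b, ha, hb, hab⟩ := hne
  obtain ⟨ha1, han, hb1, hbn⟩ := hint a b ha hb hab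
  have huniq : ∀ x y, x ≤ n → y ≤ n → Fc A x y < Fc C x y → x = a ∧ y = b := by
    intro x y hx hy hlt
    have k1 := hKey x y hx hy hlt a b ha hb
    have k2 := hKey a b ha hb hab x y hx hy
    have hm1 : Kr x y (Fc A x y) a b = Fc A a b := by omega
    have hm2 : Kr a b (Fc A a b) x y = Fc A x y := by omega
    have hub1 := VC.le_fst ha hb
    have hub2 := VC.le_snd ha hb
    have hub3 := VC.le_fst hx hy
    have hub4 := VC.le_snd hx hy
    simp only [Kr] at hm1 hm2
    constructor <;> omega
  have hCab : Fc C a b = Fc A a b + 1 := by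
    have := hsq a b ha hb
    omega
  have hCeq : ∀ x y, x ≤ n → y ≤ n → ¬(x = a ∧ y = b) → Fc C x y = Fc A x y := by
    intro x y hx hy hxy
    by_contra hne2
    have hlt : Fc A x y < Fc C x y := lt_of_le_of_ne (hle x y hx hy) (Ne.symm hne2)
    exact hxy (huniq x y hx hy hlt)
  have hI : IncOK n (Fc A) a b := by
    refine ⟨ha1, han, hb1, hbn, ?_, ?_, ?_, ?_⟩
    · have hs1 := VA.stepR (a-1) b (by omega) hb
      rw [Nat.sub_add_cancel ha1] at hs1
      have hc1 := VC.stepR (a-1) b (by omega) hb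
      rw [Nat.sub_add_cancel ha1] at hc1
      have := hCeq (a-1) b (by omega) hb (by omega)
      omega
    · have hs1 := VA.stepC a (b-1) ha (by omega)
      rw [Nat.sub_add_cancel hb1] at hs1
      have hc1 := VC.stepC a (b-1) ha (by omega)
      rw [Nat.sub_add_cancel hb1] at hc1
      have := hCeq a (b-1) ha (by omega) (by omega)
      omega
    · have hs1 := VA.stepR a b (by omega) hb
      have hc1 := VC.stepR a b (by omega) hb
      have := hCeq (a+1) b (by omega) hb (by omega)
      omega
    · have hs1 := VA.stepC a b ha (by omega)
      have hc1 := VC.stepC a b ha (by omega)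
      have := hCeq a (b+1) ha (by omega) (by omega)
      omega
  refine ⟨a, b, hI, ?_⟩
  obtain ⟨hIasm, hIFc⟩ := unF_spec (validF_inc VA hI)
  apply matrix_eq_of_Fc
  intro x y hx hy
  rw [hIFc x y hx hy]
  by_cases hxy : x = a ∧ y = b
  · obtain ⟨rfl, rfl⟩ := hxy
    simp [inc]
    omega
  · simp only [inc, if_neg hxy]
    exact hCeq x y hx hy hxy


lemma incOK_congr {r r' : ℕ → ℕ → ℤ} {p q : ℕ}
    (h : ∀ x y, x ≤ n → y ≤ n → r x y = r' x y) (hI : IncOK n r p q) : IncOK n r' p q := by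
  obtain ⟨hp1, hpn, hq1, hqn, e1, e2, e3, e4⟩ := hI
  refine ⟨hp1, hpn, hq1, hqn, ?_, ?_, ?_, ?_⟩ <;>
    rw [← h _ _ (by omega) (by omega), ← h _ _ (by omega) (by omega)] <;> omega

lemma joinIrred_iff {A : Matrix (Fin n) (Fin n) ℤ} :
    JoinIrred A ↔ ∃ a b s, Adm n a b s ∧ A = unF n (Kr a b s) := by
  constructor
  · rintro ⟨hA, C0, ⟨hC0asm, hC0cov⟩, hC0uniq⟩
    have VA : ValidF n (Fc A) := (isASM_iff_validF A).mp hA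
    obtain ⟨a, b, hI, hC0eq⟩ := inc_of_covers hA hC0asm hC0cov
    have huniq : ∀ p q, IncOK n (Fc A) p q → p = a ∧ q = b := by
      intro p q hIpq
      have hplt : p < n := hIpq.2.1
      have hqlt : q < n := hIpq.2.2.2.1
      by_contra hne
      have hcov' := covers_of_inc hA hIpq
      have := hC0uniq _ ⟨hcov'.1, hcov'.2⟩
      rw [hC0eq] at this
      have heq : ∀ x y, x ≤ n → y ≤ n →
          inc (Fc A) p q x y = inc (Fc A) a b x y := by
        intro x y hx hy
        have h1 := (unF_spec (validF_inc VA hIpq)).2 x y hx hy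
        have h2 := (unF_spec (validF_inc VA hI)).2 x y hx hy
        rw [← h1, ← h2, this]
      have h3 := heq p q (by omega) (by omega)
      have e1 : inc (Fc A) p q p q = Fc A p q + 1 := by simp [inc]
      have e2 : inc (Fc A) a b p q = Fc A p q := by simp only [inc, if_neg hne]
      omega
    have hKr := eq_Kr_of_unique_inc VA hI huniq
    have adm := adm_of_incOK VA hI
    refine ⟨a, b, Fc A a b, adm, ?_⟩
    apply matrix_eq_of_Fc
    intro x y hx hy
    rw [(unF_spec (validF_Kr (n := n) adm)).2 x y hx hy]
    exact hKr x y hx hy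
  · rintro ⟨a, b, s, adm, rfl⟩
    obtain ⟨hAasm, hAFc⟩ := unF_spec (validF_Kr (n := n) adm)
    refine ⟨hAasm, ?_⟩
    have VA : ValidF n (Fc (unF n (Kr a b s))) :=
      (isASM_iff_validF _).mp hAasm
    have hIab : IncOK n (Fc (unF n (Kr a b s))) a b :=
      incOK_congr (fun x y hx hy => (hAFc x y hx hy).symm) (incOK_Kr adm)
    have hcov := covers_of_inc hAasm hIab
    refine ⟨unF n (inc (Fc (unF n (Kr a b s))) a b), ⟨hcov.1, hcov.2⟩, ?_⟩
    rintro C ⟨hCasm, hCcov⟩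
    obtain ⟨p, q, hIpq, hCeq⟩ := inc_of_covers hAasm hCasm hCcov
    have hIpq' : IncOK n (Kr a b s) p q := incOK_congr hAFc hIpq
    obtain ⟨rfl, rfl⟩ := incOK_Kr_only adm hIpq'
    exact hCeq

lemma asmLE_J_iff {B : Matrix (Fin n) (Fin n) ℤ} (hB : IsASM B) {a b : ℕ} {s : ℤ}
    (adm : Adm n a b s) :
    asmLE (unF n (Kr a b s)) B ↔ Fc B a b ≤ s := by
  obtain ⟨hJasm, hJFc⟩ := unF_spec (validF_Kr (n := n) adm)
  have VB : ValidF n (Fc B) := (isASM_iff_validF B).mp hB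
  have han : a ≤ n := by
    obtain ⟨_, h, _⟩ := adm
    omega
  have hbn : b ≤ n := by
    obtain ⟨_, _, _, h, _⟩ := adm
    omega
  constructor
  · intro h
    have := (asmLE_iff_Fc _ B).mp h a b han hbn
    rw [hJFc a b han hbn, Kr_self adm] at this
    exact this
  · intro h
    rw [asmLE_iff_Fc]
    intro x y hx hy
    rw [hJFc x y hx hy]
    exact le_Kr VB han hbn h x y hx hy

lemma J_inj {a b a' b' : ℕ} {s s' : ℤ} (adm : Adm n a b s) (adm' : Adm n a' b' s')
    (h : unF n (Kr a b s) = unF n (Kr a' b' s')) : a = a' ∧ b = b' ∧ s = s' := by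
  have heq : ∀ x y, x ≤ n → y ≤ n → Kr a b s x y = Kr a' b' s' x y := by
    intro x y hx hy
    rw [← (unF_spec (validF_Kr (n := n) adm)).2 x y hx hy, h,
      (unF_spec (validF_Kr (n := n) adm')).2 x y hx hy]
  have hI : IncOK n (Kr a' b' s') a b := incOK_congr heq (incOK_Kr adm)
  obtain ⟨rfl, rfl⟩ := incOK_Kr_only adm' hI
  refine ⟨rfl, rfl, ?_⟩
  have han : a ≤ n := by
    obtain ⟨_, h2, _⟩ := adm
    omega
  have hbn : b ≤ n := by
    obtain ⟨_, _, _, h2, _⟩ := adm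
    omega
  have := heq a b han hbn
  rwa [Kr_self adm, Kr_self adm'] at this


section Count

variable (B : Matrix (Fin n) (Fin n) ℤ)

/-- Index set of join-irreducibles below `B`. -/
def TT (n : ℕ) (B : Matrix (Fin n) (Fin n) ℤ) : Finset ((_ : ℕ × ℕ) × ℕ) :=
  (Finset.Ico 1 n ×ˢ Finset.Ico 1 n).sigma
    (fun ab => Finset.Ico ((Fc B ab.1 ab.2).toNat) (min ab.1 ab.2))

lemma mem_TT (hB : IsASM B) (x : (_ : ℕ × ℕ) × ℕ) :
    x ∈ TT n B ↔ Adm n x.1.1 x.1.2 (x.2 : ℤ) ∧ Fc B x.1.1 x.1.2 ≤ (x.2 : ℤ) := by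
  obtain ⟨⟨a, b⟩, s⟩ := x
  have VB : ValidF n (Fc B) := (isASM_iff_validF B).mp hB
  simp only [TT, Finset.mem_sigma, Finset.mem_product, Finset.mem_Ico]
  constructor
  · rintro ⟨⟨⟨ha1, han⟩, ⟨hb1, hbn⟩⟩, hs1, hs2⟩
    have h0 : (0:ℤ) ≤ Fc B a b := VB.nonneg (by omega) (by omega)
    have hlow := VB.ge_lower (a := a) (b := b) (by omega) (by omega)
    have htn : Fc B a b ≤ (s : ℤ) := by
      have := Int.toNat_of_nonneg h0
      omega
    refine ⟨⟨ha1, han, hb1, hbn, by omega, by omega, ?_⟩, htn⟩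
    have : s + 1 ≤ min a b := hs2
    have : ((min a b : ℕ) : ℤ) = min (a:ℤ) (b:ℤ) := by push_cast; rfl
    omega
  · rintro ⟨⟨ha1, han, hb1, hbn, hs0, hsl, hsu⟩, hle⟩
    have h0 : (0:ℤ) ≤ Fc B a b := VB.nonneg (by omega) (by omega)
    have ht : (Fc B a b).toNat ≤ s := by omega
    have : ((min a b : ℕ) : ℤ) = min (a:ℤ) (b:ℤ) := by push_cast; rfl
    exact ⟨⟨⟨ha1, han⟩, hb1, hbn⟩, ht, by omega⟩

lemma beta_set_eq (hB : IsASM B) :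
    {A : Matrix (Fin n) (Fin n) ℤ | JoinIrred A ∧ asmLE A B}
      = ↑((TT n B).image (fun x => unF n (Kr x.1.1 x.1.2 (x.2 : ℤ)))) := by
  ext A
  simp only [Set.mem_setOf_eq, Finset.coe_image, Set.mem_image, Finset.mem_coe]
  constructor
  · rintro ⟨hJ, hle⟩
    obtain ⟨a, b, s, adm, rfl⟩ := joinIrred_iff.mp hJ
    have hs := (asmLE_J_iff hB adm).mp hle
    have hs0 : (0:ℤ) ≤ s := adm.2.2.2.2.1
    refine ⟨⟨(a, b), s.toNat⟩, ?_, ?_⟩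
    · rw [mem_TT B hB]
      simp only
      rw [Int.toNat_of_nonneg hs0]
      exact ⟨adm, hs⟩
    · simp only
      rw [Int.toNat_of_nonneg hs0]
  · rintro ⟨⟨⟨a, b⟩, s⟩, hmem, rfl⟩
    rw [mem_TT B hB] at hmem
    obtain ⟨adm, hle⟩ := hmem
    exact ⟨joinIrred_iff.mpr ⟨a, b, _, adm, rfl⟩, (asmLE_J_iff hB adm).mpr hle⟩

lemma asmBeta_eq_card (hB : IsASM B) : asmBeta B = (TT n B).card := by
  rw [asmBeta, beta_set_eq B hB, Set.ncard_coe_finset]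
  apply Finset.card_image_of_injOn
  intro x hx y hy hxy
  rw [Finset.mem_coe, mem_TT B hB] at hx
  rw [Finset.mem_coe, mem_TT B hB] at hy
  simp only at hxy
  obtain ⟨e1, e2, e3⟩ := J_inj hx.1 hy.1 hxy
  obtain ⟨⟨a, b⟩, s⟩ := x
  obtain ⟨⟨a', b'⟩, s'⟩ := y
  simp only at e1 e2 e3 ⊢
  subst e1
  subst e2
  have : s = s' := by exact_mod_cast e3
  rw [this]

lemma card_TT (hB : IsASM B) :
    ((TT n B).card : ℤ)
      = ∑ a ∈ Finset.Ico 1 (n+1), ∑ b ∈ Finset.Ico 1 (n+1),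
          (min (a:ℤ) (b:ℤ) - Fc B a b) := by
  have VB : ValidF n (Fc B) := (isASM_iff_validF B).mp hB
  rw [TT, Finset.card_sigma]
  rw [Finset.sum_product]
  push_cast
  have hterm : ∀ a b : ℕ, 1 ≤ a → a < n → 1 ≤ b → b < n →
      ((Finset.Ico ((Fc B a b).toNat) (min a b)).card : ℤ)
        = min (a:ℤ) (b:ℤ) - Fc B a b := by
    intro a b ha1 han hb1 hbn
    rw [Nat.card_Ico]
    have h0 : (0:ℤ) ≤ Fc B a b := VB.nonneg (by omega) (by omega)
    have h1 : Fc B a b ≤ min (a:ℤ) (b:ℤ) := by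
      have := VB.le_fst (a := a) (b := b) (by omega) (by omega)
      have := VB.le_snd (a := a) (b := b) (by omega) (by omega)
      omega
    have h2 : ((min a b : ℕ) : ℤ) = min (a:ℤ) (b:ℤ) := by push_cast; rfl
    have h3 : (Fc B a b).toNat ≤ min a b := by omega
    push_cast [Nat.cast_sub h3]
    omega
  have inner_eq : ∀ a : ℕ, 1 ≤ a → a < n →
      ∑ b ∈ Finset.Ico 1 n, ((Finset.Ico ((Fc B a b).toNat) (min a b)).card : ℤ)
        = ∑ b ∈ Finset.Ico 1 (n+1), (min (a:ℤ) (b:ℤ) - Fc B a b) := by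
    intro a ha1 han
    rw [← Finset.sum_subset (Finset.Ico_subset_Ico_right (by omega) :
        Finset.Ico 1 n ⊆ Finset.Ico 1 (n+1)) ?_]
    · apply Finset.sum_congr rfl
      intro b hb
      rw [Finset.mem_Ico] at hb
      exact hterm a b ha1 han hb.1 hb.2
    · intro b hb hb2
      rw [Finset.mem_Ico] at hb hb2
      have hbn : b = n := by omega
      subst hbn
      rw [VB.right a (by omega)]
      have : min (a:ℤ) (b:ℤ) = (a:ℤ) := by
        rw [min_eq_left]
        exact_mod_cast Nat.le_of_lt han
      omega
  rw [← Finset.sum_subset (Finset.Ico_subset_Ico_right (by omega) :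
      Finset.Ico 1 n ⊆ Finset.Ico 1 (n+1)) ?_]
  · apply Finset.sum_congr rfl
    intro a ha
    rw [Finset.mem_Ico] at ha
    exact inner_eq a ha.1 ha.2
  · intro a ha ha2
    rw [Finset.mem_Ico] at ha ha2
    have han : a = n := by omega
    subst han
    apply Finset.sum_eq_zero
    intro b hb
    rw [Finset.mem_Ico] at hb
    rw [VB.bottom b (by omega)]
    have : min ((a:ℕ):ℤ) (b:ℤ) = (b:ℤ) := by
      rw [min_eq_right]
      exact_mod_cast Nat.le_of_lt_succ hb.2
    omega

end Count


section BetaVal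

variable (B : Matrix (Fin n) (Fin n) ℤ)

lemma range_to_ite {a : ℕ} (ha : a ≤ n) (g : ℕ → ℤ) :
    ∑ p ∈ Finset.range a, g p = ∑ p ∈ Finset.range n, (if p < a then g p else 0) := by
  rw [← Finset.sum_subset (Finset.range_subset_range.mpr ha) ?_]
  · apply Finset.sum_congr rfl
    intro p hp
    rw [Finset.mem_range] at hp
    rw [if_pos hp]
  · intro p hp hp2
    rw [Finset.mem_range] at hp hp2
    rw [if_neg hp2]

lemma Fc_eq_finsum {a b : ℕ} (ha : a ≤ n) (hb : b ≤ n) :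
    Fc B a b = ∑ p : Fin n, ∑ q : Fin n,
      (if ((p:ℕ) < a ∧ (q:ℕ) < b) then B p q else 0) := by
  rw [Fc, range_to_ite ha]
  have inner : ∀ p : ℕ, p < n →
      ∑ q ∈ Finset.range b, ext B p q
        = ∑ q ∈ Finset.range n, (if q < b then ext B p q else 0) :=
    fun p _ => range_to_ite hb _
  rw [← Fin.sum_univ_eq_sum_range (fun p =>
    if p < a then ∑ q ∈ Finset.range b, ext B p q else 0) n]
  apply Finset.sum_congr rfl
  intro p _
  by_cases hpa : (p:ℕ) < a
  · rw [if_pos hpa, inner (p:ℕ) p.isLt,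
      ← Fin.sum_univ_eq_sum_range (fun q => if q < b then ext B (p:ℕ) q else 0) n]
    apply Finset.sum_congr rfl
    intro q _
    by_cases hqb : (q:ℕ) < b
    · rw [if_pos hqb, if_pos ⟨hpa, hqb⟩]
      simp [ext, p.isLt, q.isLt]
    · rw [if_neg hqb, if_neg (by tauto)]
  · rw [if_neg hpa]
    symm
    apply Finset.sum_eq_zero
    intro q _
    rw [if_neg (by tauto)]

lemma count_Ico_gt {q : ℕ} (hq : q < n) (X : ℤ) :
    ∑ b ∈ Finset.Ico 1 (n+1), (if q < b then X else 0) = ((n:ℤ) - q) * X := by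
  rw [← Finset.sum_filter]
  have : (Finset.Ico 1 (n+1)).filter (fun b => q < b) = Finset.Ico (q+1) (n+1) := by
    ext x
    simp only [Finset.mem_filter, Finset.mem_Ico]
    omega
  rw [this, Finset.sum_const, Nat.card_Ico]
  have : ((n + 1 - (q + 1) : ℕ) : ℤ) = (n:ℤ) - q := by omega
  rw [nsmul_eq_mul, this]

lemma sum_Fc (hB : IsASM B) :
    ∑ a ∈ Finset.Ico 1 (n+1), ∑ b ∈ Finset.Ico 1 (n+1), Fc B a b
      = ∑ p : Fin n, ∑ q : Fin n, ((n:ℤ) - p) * ((n:ℤ) - q) * B p q := by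
  have inner2 : ∀ p : Fin n, ∀ q : Fin n,
      ∑ a ∈ Finset.Ico 1 (n+1), ∑ b ∈ Finset.Ico 1 (n+1),
        (if ((p:ℕ) < a ∧ (q:ℕ) < b) then B p q else 0)
        = ((n:ℤ) - p) * ((n:ℤ) - q) * B p q := by
    intro p q
    have swap2 : ∀ a : ℕ, ∑ b ∈ Finset.Ico 1 (n+1),
        (if ((p:ℕ) < a ∧ (q:ℕ) < b) then B p q else 0)
        = (if (p:ℕ) < a then ((n:ℤ) - q) * B p q else 0) := by
      intro a
      by_cases hpa : (p:ℕ) < a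
      · rw [if_pos hpa, ← count_Ico_gt q.isLt (B p q)]
        apply Finset.sum_congr rfl
        intro b _
        by_cases hqb : (q:ℕ) < b
        · rw [if_pos ⟨hpa, hqb⟩, if_pos hqb]
        · rw [if_neg (by tauto), if_neg hqb]
      · rw [if_neg hpa]
        apply Finset.sum_eq_zero
        intro b _
        rw [if_neg (by tauto)]
    rw [Finset.sum_congr rfl (fun a _ => swap2 a), count_Ico_gt p.isLt]
    ring
  calc ∑ a ∈ Finset.Ico 1 (n+1), ∑ b ∈ Finset.Ico 1 (n+1), Fc B a b
      = ∑ a ∈ Finset.Ico 1 (n+1), ∑ b ∈ Finset.Ico 1 (n+1), ∑ p : Fin n, ∑ q : Fin n,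
          (if ((p:ℕ) < a ∧ (q:ℕ) < b) then B p q else 0) := by
        apply Finset.sum_congr rfl
        intro a ha
        apply Finset.sum_congr rfl
        intro b hb
        rw [Finset.mem_Ico] at ha hb
        exact Fc_eq_finsum B (by omega) (by omega)
    _ = ∑ a ∈ Finset.Ico 1 (n+1), ∑ p : Fin n, ∑ b ∈ Finset.Ico 1 (n+1), ∑ q : Fin n,
          (if ((p:ℕ) < a ∧ (q:ℕ) < b) then B p q else 0) :=
        Finset.sum_congr rfl (fun a _ => Finset.sum_comm)
    _ = ∑ p : Fin n, ∑ a ∈ Finset.Ico 1 (n+1), ∑ b ∈ Finset.Ico 1 (n+1), ∑ q : Fin n,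
          (if ((p:ℕ) < a ∧ (q:ℕ) < b) then B p q else 0) := Finset.sum_comm
    _ = ∑ p : Fin n, ∑ a ∈ Finset.Ico 1 (n+1), ∑ q : Fin n, ∑ b ∈ Finset.Ico 1 (n+1),
          (if ((p:ℕ) < a ∧ (q:ℕ) < b) then B p q else 0) :=
        Finset.sum_congr rfl (fun p _ => Finset.sum_congr rfl (fun a _ => Finset.sum_comm))
    _ = ∑ p : Fin n, ∑ q : Fin n, ∑ a ∈ Finset.Ico 1 (n+1), ∑ b ∈ Finset.Ico 1 (n+1),
          (if ((p:ℕ) < a ∧ (q:ℕ) < b) then B p q else 0) :=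
        Finset.sum_congr rfl (fun p _ => Finset.sum_comm)
    _ = ∑ p : Fin n, ∑ q : Fin n, ((n:ℤ) - p) * ((n:ℤ) - q) * B p q :=
        Finset.sum_congr rfl (fun p _ => Finset.sum_congr rfl (fun q _ => inner2 p q))

lemma Ico_sum_eq_range_sum (f : ℕ → ℤ) (h : f 0 = 0) (N : ℕ) :
    ∑ a ∈ Finset.Ico 1 (N+1), f a = ∑ a ∈ Finset.range (N+1), f a := by
  apply Finset.sum_subset
  · intro x hx
    rw [Finset.mem_Ico] at hx
    rw [Finset.mem_range]
    omega
  · intro x hx hx2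
    rw [Finset.mem_range] at hx
    rw [Finset.mem_Ico] at hx2
    have : x = 0 := by omega
    rw [this, h]

lemma gauss_sum (N : ℕ) : (∑ b ∈ Finset.range (N+1), (b:ℤ)) * 2 = ((N:ℤ)+1) * N := by
  induction N with
  | zero => simp
  | succ N ih =>
    rw [Finset.sum_range_succ]
    push_cast
    push_cast at ih
    ring_nf
    ring_nf at ih
    linarith

lemma sum_min_sq (N : ℕ) :
    ∑ a ∈ Finset.range (N+1), ∑ b ∈ Finset.range (N+1), min (a:ℤ) (b:ℤ)
      = ∑ m ∈ Finset.range (N+1), (m:ℤ)^2 := by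
  induction N with
  | zero => simp
  | succ N ih =>
    rw [Finset.sum_range_succ, Finset.sum_range_succ
      (f := fun m => (m:ℤ)^2)]
    have inner : ∀ a ∈ Finset.range (N+1),
        ∑ b ∈ Finset.range (N+2), min (a:ℤ) (b:ℤ)
          = (∑ b ∈ Finset.range (N+1), min (a:ℤ) (b:ℤ)) + (a:ℤ) := by
      intro a ha
      rw [Finset.mem_range] at ha
      rw [Finset.sum_range_succ]
      congr 1
      rw [min_eq_left]
      push_cast
      omega
    rw [Finset.sum_congr rfl inner, Finset.sum_add_distrib, ih]
    have last : ∑ b ∈ Finset.range (N+1+1), min (((N+1:ℕ)):ℤ) (b:ℤ)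
        = (∑ b ∈ Finset.range (N+1), (b:ℤ)) + ((N+1:ℕ):ℤ) := by
      rw [Finset.sum_range_succ]
      congr 1
      · apply Finset.sum_congr rfl
        intro b hb
        rw [Finset.mem_range] at hb
        rw [min_eq_right]
        push_cast
        omega
      · rw [min_self]
    rw [last]
    have g := gauss_sum N
    have hc : ∀ a ∈ Finset.range (N+1), (a:ℤ) = (a:ℤ) := fun _ _ => rfl
    push_cast
    push_cast at g
    nlinarith [g]

end BetaVal


section Inv

variable (B : Matrix (Fin n) (Fin n) ℤ)

/-- Row partial sums. -/
def vrow (B : Matrix (Fin n) (Fin n) ℤ) (i m : Fin n) : ℤ := ∑ l ∈ Finset.Iic m, B i l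

lemma sum_vrow_col (hB : IsASM B) (m : Fin n) :
    ∑ i : Fin n, vrow B i m = (m:ℤ) + 1 := by
  unfold vrow
  refine Finset.sum_comm.trans ?_
  have : ∀ l ∈ Finset.Iic m, ∑ i : Fin n, B i l = 1 := fun l _ => hB.2.2.2.2 l
  rw [Finset.sum_congr rfl this, Finset.sum_const, Fin.card_Iic]
  push_cast
  ring

lemma sum_gt_row (hB : IsASM B) (i m : Fin n) :
    ∑ l : Fin n, (if m < l then B i l else 0) = 1 - vrow B i m := by
  have hfull : ∑ l : Fin n, B i l = 1 := hB.2.2.2.1 i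
  have hsplit : ∀ l : Fin n, B i l
      = (if l ≤ m then B i l else 0) + (if m < l then B i l else 0) := by
    intro l
    rcases le_or_gt l m with h | h
    · rw [if_pos h, if_neg (not_lt.mpr h), add_zero]
    · rw [if_neg (not_le.mpr h), if_pos h, zero_add]
  have : (1:ℤ) = (∑ l : Fin n, (if l ≤ m then B i l else 0))
      + ∑ l : Fin n, (if m < l then B i l else 0) := by
    rw [← Finset.sum_add_distrib, ← Finset.sum_congr rfl (fun l _ => hsplit l), hfull]
  have hIic : ∑ l : Fin n, (if l ≤ m then B i l else 0) = vrow B i m := by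
    rw [← Finset.sum_filter]
    unfold vrow
    congr 1
    ext x
    simp
  omega

lemma count_Icc (k l : Fin n) :
    ∑ m : Fin n, (if k ≤ m ∧ m < l then (1:ℤ) else 0)
      = if k < l then ((l:ℤ) - (k:ℤ)) else 0 := by
  rw [← Finset.sum_filter]
  have : Finset.filter (fun m => k ≤ m ∧ m < l) Finset.univ = Finset.Ico k l := by
    ext x
    simp [Finset.mem_Ico]
  rw [this, Finset.sum_const, Fin.card_Ico, nsmul_eq_mul, mul_one]
  rcases lt_or_ge k l with h | h
  · rw [if_pos h]
    have : (k:ℕ) ≤ (l:ℕ) := le_of_lt h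
    push_cast [Nat.cast_sub this]
    ring
  · rw [if_neg (not_lt.mpr h)]
    have : (l:ℕ) - (k:ℕ) = 0 := by
      have : (l:ℕ) ≤ (k:ℕ) := h
      omega
    rw [this]
    rfl

lemma count_lt_fin (j : Fin n) :
    ∑ i : Fin n, (if i < j then (1:ℤ) else 0) = (j:ℤ) := by
  rw [← Finset.sum_filter]
  have : Finset.filter (fun i => i < j) Finset.univ = Finset.Iio j := by
    ext x
    simp
  rw [this, Finset.sum_const, Fin.card_Iio, nsmul_eq_mul, mul_one]

lemma count_ge_fin (l : Fin n) :
    ∑ m : Fin n, (if l ≤ m then (1:ℤ) else 0) = (n:ℤ) - (l:ℤ) := by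
  rw [← Finset.sum_filter]
  have : Finset.filter (fun m => l ≤ m) Finset.univ = Finset.Ici l := by
    ext x
    simp
  rw [this, Finset.sum_const, Fin.card_Ici, nsmul_eq_mul, mul_one]
  have : (l:ℕ) ≤ n := le_of_lt l.isLt
  push_cast [Nat.cast_sub this]
  ring

lemma pair_step (i j : Fin n) (hB : IsASM B) :
    ∑ k : Fin n, ∑ l : Fin n, (if k < l then ((l:ℤ) - (k:ℤ)) * B j k * B i l else 0)
      = ∑ m : Fin n, vrow B j m * (1 - vrow B i m) := by
  have key : ∀ k l : Fin n, (if k < l then ((l:ℤ) - (k:ℤ)) * B j k * B i l else 0)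
      = ∑ m : Fin n, (if k ≤ m ∧ m < l then B j k * B i l else 0) := by
    intro k l
    have h1 := count_Icc (n := n) k l
    calc (if k < l then ((l:ℤ) - (k:ℤ)) * B j k * B i l else 0)
        = (if k < l then ((l:ℤ) - (k:ℤ)) else 0) * (B j k * B i l) := by
          split_ifs <;> ring
      _ = (∑ m : Fin n, (if k ≤ m ∧ m < l then (1:ℤ) else 0)) * (B j k * B i l) := by
          rw [h1]
      _ = ∑ m : Fin n, (if k ≤ m ∧ m < l then (1:ℤ) else 0) * (B j k * B i l) :=
          Finset.sum_mul _ _ _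
      _ = ∑ m : Fin n, (if k ≤ m ∧ m < l then B j k * B i l else 0) := by
          apply Finset.sum_congr rfl
          intro m _
          split_ifs <;> ring
  rw [Finset.sum_congr rfl (fun k _ => Finset.sum_congr rfl (fun l _ => key k l))]
  have swap : ∑ k : Fin n, ∑ l : Fin n, ∑ m : Fin n,
      (if k ≤ m ∧ m < l then B j k * B i l else 0)
      = ∑ m : Fin n, ∑ k : Fin n, ∑ l : Fin n,
        (if k ≤ m ∧ m < l then B j k * B i l else 0) := by
    rw [Finset.sum_congr rfl (fun k (_ : k ∈ Finset.univ) => Finset.sum_comm)]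
    exact Finset.sum_comm
  rw [swap]
  apply Finset.sum_congr rfl
  intro m _
  have inner : ∀ k : Fin n, ∑ l : Fin n, (if k ≤ m ∧ m < l then B j k * B i l else 0)
      = (if k ≤ m then B j k else 0) * (1 - vrow B i m) := by
    intro k
    by_cases hk : k ≤ m
    · rw [if_pos hk]
      rw [← sum_gt_row B hB i m, Finset.mul_sum]
      apply Finset.sum_congr rfl
      intro l _
      by_cases hl : m < l
      · rw [if_pos ⟨hk, hl⟩, if_pos hl]
      · rw [if_neg (by tauto), if_neg hl, mul_zero]
    · rw [if_neg hk, zero_mul]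
      apply Finset.sum_eq_zero
      intro l _
      rw [if_neg (by tauto)]
  rw [Finset.sum_congr rfl (fun k _ => inner k), ← Finset.sum_mul]
  congr 1
  rw [← Finset.sum_filter]
  unfold vrow
  congr 1
  ext x
  simp

lemma sq_split (f : Fin n → ℤ) :
    (∑ i : Fin n, f i)^2 = (∑ i : Fin n, (f i)^2)
      + 2 * ∑ i : Fin n, ∑ j : Fin n, (if i < j then f i * f j else 0) := by
  have expand : (∑ i : Fin n, f i)^2 = ∑ i : Fin n, ∑ j : Fin n, f i * f j := by
    rw [sq, Finset.sum_mul_sum]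
  have tri : ∀ i j : Fin n, f i * f j
      = (if i < j then f i * f j else 0) + (if j < i then f i * f j else 0)
        + (if i = j then f i * f j else 0) := by
    intro i j
    rcases lt_trichotomy i j with h | h | h
    · rw [if_pos h, if_neg (by omega), if_neg (by exact Fin.ne_of_lt h)]
      ring
    · rw [if_neg (by omega), if_neg (by omega), if_pos h]
      ring
    · rw [if_neg (by omega), if_pos h, if_neg (by exact Fin.ne_of_gt h)]
      ring
  have hdiag : ∑ i : Fin n, ∑ j : Fin n, (if i = j then f i * f j else 0)
      = ∑ i : Fin n, (f i)^2 := by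
    apply Finset.sum_congr rfl
    intro i _
    rw [Finset.sum_ite_eq Finset.univ i (fun j => f i * f j)]
    simp [sq]
  have hsym : ∑ i : Fin n, ∑ j : Fin n, (if j < i then f i * f j else 0)
      = ∑ i : Fin n, ∑ j : Fin n, (if i < j then f i * f j else 0) := by
    rw [Finset.sum_comm]
    apply Finset.sum_congr rfl
    intro i _
    apply Finset.sum_congr rfl
    intro j _
    split_ifs <;> ring
  calc (∑ i : Fin n, f i)^2
      = ∑ i : Fin n, ∑ j : Fin n, f i * f j := expand
    _ = ∑ i : Fin n, ∑ j : Fin n,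
        ((if i < j then f i * f j else 0) + (if j < i then f i * f j else 0)
          + (if i = j then f i * f j else 0)) :=
        Finset.sum_congr rfl (fun i _ => Finset.sum_congr rfl (fun j _ => tri i j))
    _ = (∑ i : Fin n, ∑ j : Fin n, (if i < j then f i * f j else 0))
        + (∑ i : Fin n, ∑ j : Fin n, (if j < i then f i * f j else 0))
        + (∑ i : Fin n, ∑ j : Fin n, (if i = j then f i * f j else 0)) := by
        rw [← Finset.sum_add_distrib, ← Finset.sum_add_distrib]
        apply Finset.sum_congr rfl
        intro i _
        rw [← Finset.sum_add_distrib, ← Finset.sum_add_distrib]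
    _ = _ := by
        rw [hdiag, hsym]
        ring

end Inv


section Final

variable (B : Matrix (Fin n) (Fin n) ℤ)

lemma beta_val (hB : IsASM B) :
    (asmBeta B : ℤ) = (∑ m ∈ Finset.range (n+1), (m:ℤ)^2)
      - ∑ p : Fin n, ∑ q : Fin n, ((n:ℤ) - p) * ((n:ℤ) - q) * B p q := by
  rw [asmBeta_eq_card B hB, card_TT B hB]
  have split : ∑ a ∈ Finset.Ico 1 (n+1), ∑ b ∈ Finset.Ico 1 (n+1),
      (min (a:ℤ) (b:ℤ) - Fc B a b)
      = (∑ a ∈ Finset.Ico 1 (n+1), ∑ b ∈ Finset.Ico 1 (n+1), min (a:ℤ) (b:ℤ))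
        - ∑ a ∈ Finset.Ico 1 (n+1), ∑ b ∈ Finset.Ico 1 (n+1), Fc B a b := by
    rw [← Finset.sum_sub_distrib]
    apply Finset.sum_congr rfl
    intro a _
    rw [← Finset.sum_sub_distrib]
  rw [split, sum_Fc B hB]
  congr 1
  have h1 : ∀ a : ℕ, ∑ b ∈ Finset.Ico 1 (n+1), min (a:ℤ) (b:ℤ)
      = ∑ b ∈ Finset.range (n+1), min (a:ℤ) (b:ℤ) := by
    intro a
    apply Ico_sum_eq_range_sum
    simp
  rw [Finset.sum_congr rfl (fun a _ => h1 a),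
    Ico_sum_eq_range_sum (fun a => ∑ b ∈ Finset.range (n+1), min (a:ℤ) (b:ℤ))
      (by simp) n, sum_min_sq n]

lemma two_pairs (hB : IsASM B) (m : Fin n) :
    2 * (∑ i : Fin n, ∑ j : Fin n, (if i < j then vrow B i m * vrow B j m else 0))
      = ((m:ℤ)+1)^2 - ((m:ℤ)+1) := by
  have h := sq_split (fun i => vrow B i m)
  have hsum := sum_vrow_col B hB m
  have hsq : ∑ i : Fin n, (vrow B i m)^2 = ∑ i : Fin n, vrow B i m := by
    apply Finset.sum_congr rfl
    intro i _
    rcases hB.2.1 i m with h01 | h01 <;>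
      · unfold vrow
        rw [h01]
        ring
  rw [hsq, hsum] at h
  omega

lemma sum_vrow_row (j : Fin n) :
    ∑ m : Fin n, vrow B j m = ∑ l : Fin n, ((n:ℤ) - l) * B j l := by
  have h1 : ∀ m : Fin n, vrow B j m = ∑ l : Fin n, (if l ≤ m then B j l else 0) := by
    intro m
    rw [← Finset.sum_filter]
    unfold vrow
    congr 1
    ext x
    simp
  rw [Finset.sum_congr rfl (fun m _ => h1 m), Finset.sum_comm]
  apply Finset.sum_congr rfl
  intro l _
  have h2 : ∀ m : Fin n, (if l ≤ m then B j l else 0)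
      = (if l ≤ m then (1:ℤ) else 0) * B j l := by
    intro m
    split_ifs <;> ring
  rw [Finset.sum_congr rfl (fun m _ => h2 m), ← Finset.sum_mul, count_ge_fin l]

lemma inv_val (hB : IsASM B) :
    2 * (∑ i : Fin n, ∑ j : Fin n, ∑ k : Fin n, ∑ l : Fin n,
        (if i < j ∧ k < l then ((l : ℤ) - (k : ℤ)) * B j k * B i l else 0))
      = 2 * (∑ j : Fin n, ∑ l : Fin n, (j:ℤ) * ((n:ℤ) - l) * B j l)
        - ∑ m ∈ Finset.range n, (((m:ℤ)+1)^2 - ((m:ℤ)+1)) := by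
  have step1 : ∀ i j : Fin n, ∑ k : Fin n, ∑ l : Fin n,
      (if i < j ∧ k < l then ((l : ℤ) - (k : ℤ)) * B j k * B i l else 0)
      = if i < j then ∑ m : Fin n, vrow B j m * (1 - vrow B i m) else 0 := by
    intro i j
    by_cases hij : i < j
    · rw [if_pos hij, ← pair_step B i j hB]
      apply Finset.sum_congr rfl
      intro k _
      apply Finset.sum_congr rfl
      intro l _
      simp only [hij, true_and]
    · rw [if_neg hij]
      apply Finset.sum_eq_zero
      intro k _
      apply Finset.sum_eq_zero
      intro l _
      rw [if_neg (by tauto)]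
  rw [Finset.sum_congr rfl (fun i _ => Finset.sum_congr rfl (fun j _ => step1 i j))]
  have step2 : ∀ i j : Fin n, (if i < j then ∑ m : Fin n, vrow B j m * (1 - vrow B i m) else 0)
      = ∑ m : Fin n, (if i < j then vrow B j m * (1 - vrow B i m) else 0) := by
    intro i j
    split_ifs with h
    · rfl
    · exact (Finset.sum_eq_zero (fun m _ => rfl)).symm
  rw [Finset.sum_congr rfl (fun i _ => Finset.sum_congr rfl (fun j _ => step2 i j))]
  have swap : ∑ i : Fin n, ∑ j : Fin n, ∑ m : Fin n,
      (if i < j then vrow B j m * (1 - vrow B i m) else 0)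
      = ∑ m : Fin n, ∑ i : Fin n, ∑ j : Fin n,
        (if i < j then vrow B j m * (1 - vrow B i m) else 0) := by
    rw [Finset.sum_congr rfl (fun i (_ : i ∈ Finset.univ) => Finset.sum_comm)]
    exact Finset.sum_comm
  rw [swap]
  have step3 : ∀ m : Fin n, ∑ i : Fin n, ∑ j : Fin n,
      (if i < j then vrow B j m * (1 - vrow B i m) else 0)
      = (∑ j : Fin n, (j:ℤ) * vrow B j m)
        - ∑ i : Fin n, ∑ j : Fin n, (if i < j then vrow B i m * vrow B j m else 0) := by
    intro m
    have hpt : ∀ i j : Fin n, (if i < j then vrow B j m * (1 - vrow B i m) else 0)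
        = (if i < j then vrow B j m else 0) - (if i < j then vrow B i m * vrow B j m else 0) := by
      intro i j
      split_ifs <;> ring
    rw [Finset.sum_congr rfl (fun i _ => Finset.sum_congr rfl (fun j _ => hpt i j))]
    rw [Finset.sum_congr rfl (fun i (_ : i ∈ Finset.univ) => Finset.sum_sub_distrib _ _),
      Finset.sum_sub_distrib]
    congr 1
    rw [Finset.sum_comm]
    apply Finset.sum_congr rfl
    intro j _
    have h2 : ∀ i : Fin n, (if i < j then vrow B j m else 0)
        = (if i < j then (1:ℤ) else 0) * vrow B j m := by
      intro i
      split_ifs <;> ring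
    rw [Finset.sum_congr rfl (fun i _ => h2 i), ← Finset.sum_mul, count_lt_fin j]
  rw [Finset.sum_congr rfl (fun m _ => step3 m), Finset.sum_sub_distrib]
  have hfirst : ∑ m : Fin n, ∑ j : Fin n, (j:ℤ) * vrow B j m
      = ∑ j : Fin n, ∑ l : Fin n, (j:ℤ) * ((n:ℤ) - l) * B j l := by
    rw [Finset.sum_comm]
    apply Finset.sum_congr rfl
    intro j _
    rw [← Finset.mul_sum, sum_vrow_row B j, Finset.mul_sum]
    apply Finset.sum_congr rfl
    intro l _
    ring
  rw [hfirst]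
  have hsecond : 2 * ∑ m : Fin n, ∑ i : Fin n, ∑ j : Fin n,
      (if i < j then vrow B i m * vrow B j m else 0)
      = ∑ m ∈ Finset.range n, (((m:ℤ)+1)^2 - ((m:ℤ)+1)) := by
    rw [Finset.mul_sum, Finset.sum_congr rfl (fun m _ => two_pairs B hB m)]
    exact Fin.sum_univ_eq_sum_range (fun m => ((m:ℤ)+1)^2 - ((m:ℤ)+1)) n
  rw [mul_sub, hsecond]

lemma sum_reflect_int (N : ℕ) :
    ∑ m ∈ Finset.range N, ((N:ℤ) - m) = ∑ m ∈ Finset.range (N+1), (m:ℤ) := by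
  induction N with
  | zero => simp
  | succ N ih =>
    rw [Finset.sum_range_succ (f := fun m => ((N+1:ℕ):ℤ) - m),
      Finset.sum_range_succ (f := fun m => (m:ℤ))]
    push_cast
    have : ∀ m ∈ Finset.range N, ((N:ℤ) + 1 - m) = ((N:ℤ) - m) + 1 := by
      intro m _
      ring
    rw [Finset.sum_congr rfl this, Finset.sum_add_distrib, ih]
    rw [Finset.sum_const, Finset.card_range]
    push_cast
    ring

lemma arithE (N : ℕ) :
    2 * (∑ m ∈ Finset.range (N+1), (m:ℤ)^2)
      + ∑ m ∈ Finset.range N, (((m:ℤ)+1)^2 - ((m:ℤ)+1))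
      = 2 * (N:ℤ) * ∑ m ∈ Finset.range (N+1), (m:ℤ) := by
  induction N with
  | zero => simp
  | succ N ih =>
    rw [Finset.sum_range_succ (f := fun m => (m:ℤ)^2),
      Finset.sum_range_succ (f := fun m => ((m:ℤ)+1)^2 - ((m:ℤ)+1)),
      Finset.sum_range_succ (f := fun m => (m:ℤ))]
    have g := gauss_sum N
    push_cast
    push_cast at ih g
    nlinarith [ih, g]

lemma combo (hB : IsASM B) :
    (∑ p : Fin n, ∑ q : Fin n, ((n:ℤ) - p) * ((n:ℤ) - q) * B p q)
      + ∑ p : Fin n, ∑ q : Fin n, (p:ℤ) * ((n:ℤ) - q) * B p q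
      = (n:ℤ) * ∑ m ∈ Finset.range n, ((n:ℤ) - m) := by
  have merge : (∑ p : Fin n, ∑ q : Fin n, ((n:ℤ) - p) * ((n:ℤ) - q) * B p q)
      + ∑ p : Fin n, ∑ q : Fin n, (p:ℤ) * ((n:ℤ) - q) * B p q
      = ∑ p : Fin n, ∑ q : Fin n, (n:ℤ) * ((n:ℤ) - q) * B p q := by
    rw [← Finset.sum_add_distrib]
    apply Finset.sum_congr rfl
    intro p _
    rw [← Finset.sum_add_distrib]
    apply Finset.sum_congr rfl
    intro q _
    ring
  rw [merge, Finset.sum_comm]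
  have inner : ∀ q : Fin n, ∑ p : Fin n, (n:ℤ) * ((n:ℤ) - q) * B p q
      = (n:ℤ) * ((n:ℤ) - q) := by
    intro q
    rw [← Finset.mul_sum, hB.2.2.2.2 q, mul_one]
  rw [Finset.sum_congr rfl (fun q _ => inner q)]
  rw [Finset.mul_sum]
  rw [← Fin.sum_univ_eq_sum_range (fun m => (n:ℤ) * ((n:ℤ) - m)) n]

end Final


end ASMAux

theorem beta_eq_weighted_inversions {n : ℕ} (B : Matrix (Fin n) (Fin n) ℤ)
    (hB : IsASM B) :
    (asmBeta B : ℤ) =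
      ∑ i : Fin n, ∑ j : Fin n, ∑ k : Fin n, ∑ l : Fin n,
        if i < j ∧ k < l then ((l : ℤ) - (k : ℤ)) * B j k * B i l else 0 := by
  have h1 := ASMAux.beta_val B hB
  have h2 := ASMAux.inv_val B hB
  have h3 := ASMAux.arithE n
  have h4 := ASMAux.combo B hB
  have h5 := ASMAux.sum_reflect_int n
  have h6 : (n:ℤ) * (∑ m ∈ Finset.range n, ((n:ℤ) - m))
      = (n:ℤ) * ∑ m ∈ Finset.range (n+1), (m:ℤ) := by rw [h5]
  linarith
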